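/- Let u(x,y,z,w) = sin(x+z)·cosh(y+w), v(x,y,z,w) = −cos(x+z)·sinh(y+w), u₀(x,y,z,w) = x+y+z+w, v₀(x,y,z,w) = x−y+z−w, let α, β ∈ ℝ, and define f̃ = (u + αu₀, v + αv₀, u + βu₀, v + βv₀) : ℝ⁴ → ℝ⁴. Then f̃ is anti-i-holomorphic, and at every p = (x,y,z,w) the graph Γ_{f̃} has equal Kähler angles with cos²θ(p) = 2(α−β)² / (1 + 2[(u_x+α)² + (u_y+α)² + (u_x+β)² + (u_y+β)²]), where u_x = cos(x+z)cosh(y+w) and u_y = sin(x+z)sinh(y+w). Consequently cos²θ(p) ≤ 2(α−β)²/(1 + 2(α−β)²) < 1 everywhere, so Γ_{f̃} has no J₀-complex points; and if αβ ≥ 0 then cos²θ(p) ≤ 2(α²+β²)/(1 + 2(α²+β²)) for every p. -/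

import Mathlib

open scoped RealInnerProductSpace

noncomputable section

abbrev E4 : Type := EuclideanSpace ℝ (Fin 4)

noncomputable def mk4 (a b c d : ℝ) : E4 := (WithLp.equiv 2 (Fin 4 → ℝ)).symm ![a, b, c, d]

/-- The orthogonal complex structure `i(x,y,z,w) = (−y, x, −w, z)` of ℝ⁴. -/
noncomputable def iC : E4 →L[ℝ] E4 :=
  LinearMap.toContinuousLinearMap
    (Matrix.toEuclideanLin (!![0,-1,0,0; 1,0,0,0; 0,0,0,-1; 0,0,1,0] : Matrix (Fin 4) (Fin 4) ℝ))

noncomputable def Sp (f : E4 → E4) (p : E4) : E4 →L[ℝ] E4 :=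
  Ring.inverse (1 + ContinuousLinearMap.adjoint (fderiv ℝ f p) * fderiv ℝ f p) *
    (ContinuousLinearMap.adjoint (fderiv ℝ f p) - fderiv ℝ f p)

noncomputable def uS (p : E4) : ℝ := Real.sin (p 0 + p 2) * Real.cosh (p 1 + p 3)

noncomputable def vS (p : E4) : ℝ := -(Real.cos (p 0 + p 2) * Real.sinh (p 1 + p 3))

noncomputable def u0 (p : E4) : ℝ := p 0 + p 1 + p 2 + p 3

noncomputable def v0 (p : E4) : ℝ := p 0 - p 1 + p 2 - p 3

noncomputable def fT (α β : ℝ) : E4 → E4 := fun p =>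
  mk4 (uS p + α * u0 p) (vS p + α * v0 p) (uS p + β * u0 p) (vS p + β * v0 p)

/-- `u_x = cos(x+z)cosh(y+w)` -/
noncomputable def ux (p : E4) : ℝ := Real.cos (p 0 + p 2) * Real.cosh (p 1 + p 3)

/-- `u_y = sin(x+z)sinh(y+w)` -/
noncomputable def uy (p : E4) : ℝ := Real.sin (p 0 + p 2) * Real.sinh (p 1 + p 3)

/-- the claimed value of `cos²θ` at `p` -/
noncomputable def cos2 (α β : ℝ) (p : E4) : ℝ :=
  2 * (α - β) ^ 2 /
    (1 + 2 * ((ux p + α) ^ 2 + (uy p + α) ^ 2 + (ux p + β) ^ 2 + (uy p + β) ^ 2))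

/-! ### Auxiliary material -/

open scoped Matrix

noncomputable def toE : Matrix (Fin 4) (Fin 4) ℝ ≃⋆ₐ[ℝ] (E4 →L[ℝ] E4) :=
  Matrix.toEuclideanCLM (𝕜 := ℝ)

noncomputable def q (j : Fin 4) : E4 →L[ℝ] ℝ := EuclideanSpace.proj j

/-- generic Jacobian matrix with `a = uₓ`, `b = u_y`. -/
noncomputable def Agen (a b α β : ℝ) : Matrix (Fin 4) (Fin 4) ℝ :=
  !![a+α, b+α, a+α, b+α;
     b+α, -(a+α), b+α, -(a+α);
     a+β, b+β, a+β, b+β;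
     b+β, -(a+β), b+β, -(a+β)]

noncomputable def Ngen (a b α β : ℝ) : ℝ :=
  (a+α)^2 + (b+α)^2 + (a+β)^2 + (b+β)^2

noncomputable def Kg (a b α β : ℝ) : Matrix (Fin 4) (Fin 4) ℝ :=
  let N := Ngen a b α β
  !![1+N, 0, -N, 0;
     0, 1+N, 0, -N;
     -N, 0, 1+N, 0;
     0, -N, 0, 1+N]

noncomputable def Kgen (a b α β : ℝ) : Matrix (Fin 4) (Fin 4) ℝ :=
  (1 + 2 * Ngen a b α β)⁻¹ • Kg a b α β

lemma Ngen_pos (a b α β : ℝ) : (0:ℝ) < 1 + 2 * Ngen a b α β := by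
  simp only [Ngen]; positivity

set_option maxHeartbeats 1000000 in
lemma matGK' (a b α β : ℝ) :
    (1 + (Agen a b α β)ᵀ * Agen a b α β) * Kg a b α β =
      (1 + 2 * Ngen a b α β) • 1 := by
  ext i j
  fin_cases i <;> fin_cases j <;>
    simp [Agen, Kg, Ngen, Matrix.mul_apply, Fin.sum_univ_four, Matrix.one_apply,
      Matrix.vecHead, Matrix.vecTail] <;>
    ring

set_option maxHeartbeats 1000000 in
lemma matKG' (a b α β : ℝ) :
    Kg a b α β * (1 + (Agen a b α β)ᵀ * Agen a b α β) =
      (1 + 2 * Ngen a b α β) • 1 := by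
  ext i j
  fin_cases i <;> fin_cases j <;>
    simp [Agen, Kg, Ngen, Matrix.mul_apply, Fin.sum_univ_four, Matrix.one_apply,
      Matrix.vecHead, Matrix.vecTail] <;>
    ring

set_option maxHeartbeats 2000000 in
lemma matSS' (a b α β : ℝ) :
    (Kg a b α β * ((Agen a b α β)ᵀ - Agen a b α β)) *
      (Kg a b α β * ((Agen a b α β)ᵀ - Agen a b α β)) =
      (-(2 * (α - β) ^ 2 * (1 + 2 * Ngen a b α β))) • 1 := by
  ext i j
  fin_cases i <;> fin_cases j <;>
    simp [Agen, Kg, Ngen, Matrix.mul_apply, Fin.sum_univ_four, Matrix.one_apply,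
      Matrix.vecHead, Matrix.vecTail, Matrix.vecMul, dotProduct] <;>
    ring

lemma matGK (a b α β : ℝ) :
    (1 + (Agen a b α β)ᵀ * Agen a b α β) * Kgen a b α β = 1 := by
  have hc := (Ngen_pos a b α β).ne'
  rw [Kgen, mul_smul_comm, matGK', smul_smul, inv_mul_cancel₀ hc, one_smul]

lemma matKG (a b α β : ℝ) :
    Kgen a b α β * (1 + (Agen a b α β)ᵀ * Agen a b α β) = 1 := by
  have hc := (Ngen_pos a b α β).ne'
  rw [Kgen, smul_mul_assoc, matKG', smul_smul, inv_mul_cancel₀ hc, one_smul]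

lemma matSS (a b α β : ℝ) :
    (Kgen a b α β * ((Agen a b α β)ᵀ - Agen a b α β)) *
      (Kgen a b α β * ((Agen a b α β)ᵀ - Agen a b α β)) =
      -(2 * (α - β) ^ 2 /
          (1 + 2 * ((a + α) ^ 2 + (b + α) ^ 2 + (a + β) ^ 2 + (b + β) ^ 2))) •
        (1 : Matrix (Fin 4) (Fin 4) ℝ) := by
  have hc := (Ngen_pos a b α β).ne'
  simp only [Kgen, smul_mul_assoc, mul_smul_comm, smul_smul, matSS']
  have hNg : (a + α) ^ 2 + (b + α) ^ 2 + (a + β) ^ 2 + (b + β) ^ 2 = Ngen a b α β := rfl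
  rw [hNg]
  congr 1
  field_simp

lemma matAnti (a b α β : ℝ) :
    Agen a b α β * !![0,-1,0,0; 1,0,0,0; 0,0,0,-1; 0,0,1,0] =
      -(!![0,-1,0,0; 1,0,0,0; 0,0,0,-1; 0,0,1,0] * Agen a b α β) := by
  ext i j
  fin_cases i <;> fin_cases j <;>
    simp [Agen, Matrix.mul_apply, Fin.sum_univ_four, Matrix.vecHead, Matrix.vecTail] <;>
    ring

/-! ### The derivative of `fT` -/

lemma hasFDerivAt_compU (γ : ℝ) (p : E4) :
    HasFDerivAt (fun p : E4 => uS p + γ * u0 p)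
      ((ux p + γ) • (q 0 + q 2) + (uy p + γ) • (q 1 + q 3)) p := by
  have hq : ∀ j : Fin 4, HasFDerivAt (fun p : E4 => p j) (q j) p := fun j => (q j).hasFDerivAt
  have hs : HasFDerivAt (fun p : E4 => p 0 + p 2) (q 0 + q 2) p := (hq 0).add (hq 2)
  have ht : HasFDerivAt (fun p : E4 => p 1 + p 3) (q 1 + q 3) p := (hq 1).add (hq 3)
  have hsin := (Real.hasDerivAt_sin (p 0 + p 2)).comp_hasFDerivAt p hs
  have hcosh := (Real.hasDerivAt_cosh (p 1 + p 3)).comp_hasFDerivAt p ht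
  have hu := hsin.mul hcosh
  have hu0 := ((((hq 0).add (hq 1)).add (hq 2)).add (hq 3)).const_mul γ
  have h := hu.add hu0
  simp only [uS, u0]
  refine h.congr_fderiv ?_
  ext v
  simp only [ContinuousLinearMap.add_apply, ContinuousLinearMap.coe_smul', Pi.smul_apply,
    ContinuousLinearMap.smul_apply, smul_eq_mul, Function.comp, ux, uy]
  ring

lemma hasFDerivAt_compV (γ : ℝ) (p : E4) :
    HasFDerivAt (fun p : E4 => vS p + γ * v0 p)
      ((uy p + γ) • (q 0 + q 2) - (ux p + γ) • (q 1 + q 3)) p := by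
  have hq : ∀ j : Fin 4, HasFDerivAt (fun p : E4 => p j) (q j) p := fun j => (q j).hasFDerivAt
  have hs : HasFDerivAt (fun p : E4 => p 0 + p 2) (q 0 + q 2) p := (hq 0).add (hq 2)
  have ht : HasFDerivAt (fun p : E4 => p 1 + p 3) (q 1 + q 3) p := (hq 1).add (hq 3)
  have hcos := (Real.hasDerivAt_cos (p 0 + p 2)).comp_hasFDerivAt p hs
  have hsinh := (Real.hasDerivAt_sinh (p 1 + p 3)).comp_hasFDerivAt p ht
  have hv := (hcos.mul hsinh).neg
  have hv0 := ((((hq 0).sub (hq 1)).add (hq 2)).sub (hq 3)).const_mul γ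
  have h := hv.add hv0
  simp only [vS, v0]
  refine h.congr_fderiv ?_
  ext v
  simp only [ContinuousLinearMap.add_apply, ContinuousLinearMap.sub_apply,
    ContinuousLinearMap.neg_apply, ContinuousLinearMap.coe_smul', Pi.smul_apply,
    ContinuousLinearMap.smul_apply, smul_eq_mul, Function.comp, ux, uy]
  ring

noncomputable def Amat (α β : ℝ) (p : E4) : Matrix (Fin 4) (Fin 4) ℝ :=
  Agen (ux p) (uy p) α β

lemma toE_apply (A : Matrix (Fin 4) (Fin 4) ℝ) (v : E4) (j : Fin 4) :
    toE A v j = ∑ k, A j k * v k := by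
  have h2 := congrFun (Matrix.ofLp_toEuclideanCLM (𝕜 := ℝ) A v) j
  simpa [toE, Matrix.toLin'_apply, Matrix.mulVec, dotProduct] using h2

lemma hasFDerivAt_fT (α β : ℝ) (p : E4) :
    HasFDerivAt (fT α β) (toE (Amat α β p)) p := by
  have h0 := hasFDerivAt_compU α p
  have h1 := hasFDerivAt_compV α p
  have h2 := hasFDerivAt_compU β p
  have h3 := hasFDerivAt_compV β p
  set L0 := (ux p + α) • (q 0 + q 2) + (uy p + α) • (q 1 + q 3) with hL0
  set L1 := (uy p + α) • (q 0 + q 2) - (ux p + α) • (q 1 + q 3) with hL1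
  set L2 := (ux p + β) • (q 0 + q 2) + (uy p + β) • (q 1 + q 3) with hL2
  set L3 := (uy p + β) • (q 0 + q 2) - (ux p + β) • (q 1 + q 3) with hL3
  have hg : HasFDerivAt
      (fun p : E4 =>
        (![uS p + α * u0 p, vS p + α * v0 p, uS p + β * u0 p, vS p + β * v0 p] : Fin 4 → ℝ))
      (ContinuousLinearMap.pi ![L0, L1, L2, L3]) p := by
    apply hasFDerivAt_pi''
    intro i
    fin_cases i <;>
      simp only [ContinuousLinearMap.proj_pi, Matrix.cons_val_zero, Matrix.cons_val_one,
        Matrix.head_cons, Matrix.cons_val_two, Matrix.tail_cons, Matrix.cons_val_three,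
        Fin.mk_zero, Fin.mk_one, Fin.isValue]
    · exact h0
    · exact h1
    · exact h2
    · exact h3
  have hL := ((PiLp.continuousLinearEquiv 2 ℝ (fun _ : Fin 4 => ℝ)).symm :
      (Fin 4 → ℝ) →L[ℝ] E4).hasFDerivAt.comp p hg
  have hfun : fT α β = fun p : E4 =>
      ((PiLp.continuousLinearEquiv 2 ℝ (fun _ : Fin 4 => ℝ)).symm : (Fin 4 → ℝ) →L[ℝ] E4)
        (![uS p + α * u0 p, vS p + α * v0 p, uS p + β * u0 p, vS p + β * v0 p]) := rfl
  rw [hfun]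
  refine hL.congr_fderiv ?_
  refine ContinuousLinearMap.ext fun v => ?_
  refine PiLp.ext fun j => ?_
  have hrhs := toE_apply (Amat α β p) v j
  fin_cases j
  all_goals rw [hrhs]
  all_goals simp [Amat, Agen, hL0, hL1, hL2, hL3, q, Fin.sum_univ_four,
    ContinuousLinearMap.coe_comp', ContinuousLinearEquiv.coe_coe,
    PiLp.continuousLinearEquiv_symm_apply, WithLp.equiv_symm_apply,
    ContinuousLinearMap.pi_apply, Matrix.vecHead, Matrix.vecTail]
  all_goals ring

theorem stmt_15 (α β : ℝ) :
    Differentiable ℝ (fT α β) ∧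
    (∀ p : E4, (fderiv ℝ (fT α β) p) ∘L iC = -(iC ∘L fderiv ℝ (fT α β) p)) ∧
    (∀ p : E4, Sp (fT α β) p * Sp (fT α β) p = -(cos2 α β p) • 1) ∧
    (∀ p : E4, cos2 α β p ≤ 2 * (α - β) ^ 2 / (1 + 2 * (α - β) ^ 2)) ∧
    2 * (α - β) ^ 2 / (1 + 2 * (α - β) ^ 2) < 1 ∧
    (∀ p : E4, fderiv ℝ (fT α β) p * fderiv ℝ (fT α β) p ≠ -1) ∧
    (α * β ≥ 0 →
      ∀ p : E4, cos2 α β p ≤ 2 * (α ^ 2 + β ^ 2) / (1 + 2 * (α ^ 2 + β ^ 2))) := by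
  have hfd : ∀ p : E4, HasFDerivAt (fT α β) (toE (Amat α β p)) p := hasFDerivAt_fT α β
  have hfderiv : ∀ p : E4, fderiv ℝ (fT α β) p = toE (Amat α β p) := fun p => (hfd p).fderiv
  have hiC : iC = toE (!![0,-1,0,0; 1,0,0,0; 0,0,0,-1; 0,0,1,0]) := rfl
  have hcos2le : ∀ p : E4, cos2 α β p ≤ 2 * (α - β) ^ 2 / (1 + 2 * (α - β) ^ 2) := by
    intro p
    unfold cos2
    have h1 : (0:ℝ) < 1 + 2 * (α - β) ^ 2 := by positivity
    have h2 : (0:ℝ) <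
        1 + 2 * ((ux p + α) ^ 2 + (uy p + α) ^ 2 + (ux p + β) ^ 2 + (uy p + β) ^ 2) := by
      positivity
    have hNd : (α - β) ^ 2 ≤
        (ux p + α) ^ 2 + (uy p + α) ^ 2 + (ux p + β) ^ 2 + (uy p + β) ^ 2 := by
      nlinarith [sq_nonneg (ux p + α + (ux p + β)), sq_nonneg (uy p + α + (uy p + β))]
    rw [div_le_div_iff₀ h2 h1]
    nlinarith [mul_nonneg (sq_nonneg (α - β)) (sub_nonneg.2 hNd)]
  refine ⟨fun p => (hfd p).differentiableAt, ?_, ?_, hcos2le, ?_, ?_, ?_⟩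
  · -- anti-i-holomorphic
    intro p
    rw [hfderiv p, hiC]
    show toE (Amat α β p) * toE _ = -(toE _ * toE (Amat α β p))
    rw [← map_mul, ← map_mul, ← map_neg]
    exact congrArg _ (matAnti (ux p) (uy p) α β)
  · -- S² = -cos²θ
    intro p
    have hadj : ContinuousLinearMap.adjoint (fderiv ℝ (fT α β) p) = toE (Amat α β p)ᵀ := by
      rw [hfderiv p, ← ContinuousLinearMap.star_eq_adjoint, ← map_star,
        Matrix.star_eq_conjTranspose, Matrix.conjTranspose_eq_transpose_of_trivial]
    unfold Sp
    rw [hadj, hfderiv p]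
    simp only [Amat]
    have hG : (1 : E4 →L[ℝ] E4) + toE (Agen (ux p) (uy p) α β)ᵀ * toE (Agen (ux p) (uy p) α β) =
        toE (1 + (Agen (ux p) (uy p) α β)ᵀ * Agen (ux p) (uy p) α β) := by
      rw [map_add, map_mul, map_one]
    have hsub : toE (Agen (ux p) (uy p) α β)ᵀ - toE (Agen (ux p) (uy p) α β) = toE ((Agen (ux p) (uy p) α β)ᵀ - Agen (ux p) (uy p) α β) :=
      (map_sub _ _ _).symm
    rw [hG, hsub]
    have h1 : toE (1 + (Agen (ux p) (uy p) α β)ᵀ * Agen (ux p) (uy p) α β) * toE (Kgen (ux p) (uy p) α β) = 1 := by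
      rw [← map_mul, matGK, map_one]
    have h2 : toE (Kgen (ux p) (uy p) α β) * toE (1 + (Agen (ux p) (uy p) α β)ᵀ * Agen (ux p) (uy p) α β) = 1 := by
      rw [← map_mul, matKG, map_one]
    have hinv : Ring.inverse (toE (1 + (Agen (ux p) (uy p) α β)ᵀ * Agen (ux p) (uy p) α β)) =
        toE (Kgen (ux p) (uy p) α β) :=
      Ring.inverse_unit ⟨toE (1 + (Agen (ux p) (uy p) α β)ᵀ * Agen (ux p) (uy p) α β),
        toE (Kgen (ux p) (uy p) α β), h1, h2⟩
    rw [hinv, ← map_mul, ← map_mul, matSS (ux p) (uy p) α β, map_smul, map_one]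
    rfl
  · -- strict bound < 1
    rw [div_lt_one (by positivity)]
    linarith [sq_nonneg (α - β)]
  · -- no complex points
    intro p h
    rw [hfderiv p] at h
    have hA : Amat α β p * Amat α β p = -1 := by
      apply toE.injective
      rw [map_mul, map_neg, map_one]
      exact h
    have h00 := congrFun (congrFun hA 0) 0
    have h02 := congrFun (congrFun hA 0) 2
    simp [Amat, Agen, Matrix.mul_apply, Fin.sum_univ_four, Matrix.neg_apply,
      Matrix.one_apply] at h00 h02
    nlinarith [h00, h02]
  · -- αβ ≥ 0 bound
    intro hab p
    refine le_trans (hcos2le p) ?_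
    rw [div_le_div_iff₀ (by positivity) (by positivity)]
    nlinarith [hab, sq_nonneg (α - β), sq_nonneg (α + β)]

end
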